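/- With the notation of the previous statement, for any sequence of rectangle transformations carrying V_0 to V_1 one has the lower bound ∑_{j=1}^k |Area(R_j)| ≥ |Area|(P), where |Area|(P)=∑_i |ω(A_i)| Area(A_i) is the absolute area of the oriented lattice polytope P determined by V_0 and V_1. -/

import Mathlib

open MeasureTheory

/-- The multiset of all x- and y-coordinates of a finite set of points in ℝ². -/
def coords (S : Finset (ℝ × ℝ)) : Multiset ℝ :=
  S.val.map Prod.fst + S.val.map Prod.snd

/-- The winding number around `p` of the lattice polytope whose horizontal edges
are the oriented segments from `q` to `h q` (`q ∈ V0`): a signed count of the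
horizontal edges crossing the vertical ray going up from `p` (+1 for a leftward
edge, −1 for a rightward edge; counterclockwise winding is positive). -/
noncomputable def wind (V0 : Finset (ℝ × ℝ)) (h : ℝ × ℝ → ℝ × ℝ) (p : ℝ × ℝ) : ℤ :=
  ∑ q ∈ V0,
    if p.2 < q.2 ∧ min q.1 (h q).1 < p.1 ∧ p.1 < max q.1 (h q).1 then
      (if (h q).1 < q.1 then 1 else -1)
    else 0

noncomputable def term (q r p : ℝ × ℝ) : ℤ :=
  if p.2 < q.2 ∧ min q.1 r.1 < p.1 ∧ p.1 < max q.1 r.1 then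
    (if r.1 < q.1 then 1 else -1)
  else 0

lemma wind_eq (S : Finset (ℝ × ℝ)) (g : ℝ × ℝ → ℝ × ℝ) (p : ℝ × ℝ) :
    wind S g p = ∑ q ∈ S, term q (g q) p := rfl

lemma term_diff (q r p : ℝ × ℝ) (h1 : p.1 ≠ q.1) (h2 : p.1 ≠ r.1) :
    term q r p = (if p.2 < q.2 ∧ p.1 < q.1 then 1 else 0)
      - (if p.2 < q.2 ∧ p.1 < r.1 then 1 else 0) := by
  unfold term
  by_cases hy : p.2 < q.2
  · rcases h1.lt_or_gt with hq | hq <;> rcases h2.lt_or_gt with hr | hr <;>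
      simp [hy, hq, hr, lt_min_iff, min_lt_iff, lt_max_iff, max_lt_iff,
        not_lt_of_gt, le_of_lt, asymm hq, asymm hr] <;> linarith
  · simp [hy]

lemma term_add (q r s p : ℝ × ℝ) (hqr : q.2 = r.2)
    (h1 : p.1 ≠ q.1) (h2 : p.1 ≠ r.1) (h3 : p.1 ≠ s.1) :
    term q s p = term q r p + term r s p := by
  rw [term_diff q s p h1 h3, term_diff q r p h1 h2, term_diff r s p h2 h3, hqr]
  ring

lemma not_uIcc_iff {x a b : ℝ} (hx : x ∉ Set.uIcc a b) : x < a ↔ x < b := by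
  rw [Set.mem_uIcc] at hx
  push_neg at hx
  constructor <;> intro hlt <;> by_contra hge <;> push_neg at hge
  · have := hx.2 hge; linarith
  · have := hx.1 hge; linarith

lemma D_le_one (v w p : ℝ × ℝ) (h1 : p.1 ≠ v.1) (h2 : p.1 ≠ w.1) :
    |term v (w.1, v.2) p + term w (v.1, w.2) p| ≤ 1 := by
  rw [term_diff v (w.1, v.2) p h1 h2, term_diff w (v.1, w.2) p h2 h1]
  simp only
  split_ifs <;> first | (exfalso; tauto) | norm_num

lemma D_zero (v w p : ℝ × ℝ) (h1 : p.1 ≠ v.1) (h2 : p.1 ≠ w.1)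
    (hp : p ∉ Set.uIcc v.1 w.1 ×ˢ Set.uIcc v.2 w.2) :
    term v (w.1, v.2) p + term w (v.1, w.2) p = 0 := by
  rw [term_diff v (w.1, v.2) p h1 h2, term_diff w (v.1, w.2) p h2 h1]
  simp only
  rw [Set.mem_prod, not_and_or] at hp
  rcases hp with hx | hy
  · have hiff : p.1 < v.1 ↔ p.1 < w.1 := not_uIcc_iff hx
    simp only [hiff]; ring
  · have hiff : p.2 < v.2 ↔ p.2 < w.2 := not_uIcc_iff hy
    simp only [hiff]; ring

lemma D_bound (v w p : ℝ × ℝ) (h1 : p.1 ≠ v.1) (h2 : p.1 ≠ w.1) :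
    |((term v (w.1, v.2) p + term w (v.1, w.2) p : ℤ) : ℝ)|
      ≤ (Set.uIcc v.1 w.1 ×ˢ Set.uIcc v.2 w.2).indicator (fun _ => (1:ℝ)) p := by
  rw [← Int.cast_abs]
  by_cases hp : p ∈ Set.uIcc v.1 w.1 ×ˢ Set.uIcc v.2 w.2
  · rw [Set.indicator_of_mem hp]
    exact_mod_cast D_le_one v w p h1 h2
  · rw [Set.indicator_of_notMem hp, D_zero v w p h1 h2 hp]
    norm_num

lemma mem_coords_fst {S : Finset (ℝ × ℝ)} {q : ℝ × ℝ} (hq : q ∈ S) : q.1 ∈ coords S := by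
  unfold coords
  exact Multiset.mem_add.2 (Or.inl (Multiset.mem_map_of_mem _ hq))

lemma mem_coords_snd {S : Finset (ℝ × ℝ)} {q : ℝ × ℝ} (hq : q ∈ S) : q.2 ∈ coords S := by
  unfold coords
  exact Multiset.mem_add.2 (Or.inr (Multiset.mem_map_of_mem _ hq))

lemma fst_injOn {S : Finset (ℝ × ℝ)} (hS : (coords S).Nodup) :
    ∀ a ∈ S, ∀ b ∈ S, a.1 = b.1 → a = b := by
  have hx : (S.val.map Prod.fst).Nodup := (Multiset.nodup_add.1 hS).1
  exact fun a ha b hb => Multiset.inj_on_of_nodup_map hx a ha b hb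

lemma snd_injOn {S : Finset (ℝ × ℝ)} (hS : (coords S).Nodup) :
    ∀ a ∈ S, ∀ b ∈ S, a.2 = b.2 → a = b := by
  have hy : (S.val.map Prod.snd).Nodup := (Multiset.nodup_add.1 hS).2.1
  exact fun a ha b hb => Multiset.inj_on_of_nodup_map hy a ha b hb

/-- basic facts about one step of the transformation -/
lemma step_facts {S : Finset (ℝ × ℝ)} (hS : (coords S).Nodup) {v w : ℝ × ℝ}
    (hv : v ∈ S) (hw : w ∈ S) (hvw : v ≠ w) :
    v.1 ≠ w.1 ∧ v.2 ≠ w.2 ∧ (w.1, v.2) ∉ S ∧ (v.1, w.2) ∉ S := by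
  have h1 : v.1 ≠ w.1 := fun h => hvw (fst_injOn hS v hv w hw h)
  have h2 : v.2 ≠ w.2 := fun h => hvw (snd_injOn hS v hv w hw h)
  refine ⟨h1, h2, fun ha => ?_, fun hb => ?_⟩
  · have : (w.1, v.2) = w := fst_injOn hS _ ha w hw rfl
    exact h2 (by rw [← this])
  · have : (v.1, w.2) = v := fst_injOn hS _ hb v hv rfl
    exact h2 (by rw [← this])

lemma step_decomp {S : Finset (ℝ × ℝ)} (hS : (coords S).Nodup) {v w : ℝ × ℝ}
    (hv : v ∈ S) (hw : w ∈ S) (hvw : v ≠ w) :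
    S = insert v (insert w (S \ {v, w})) ∧
    (S \ {v, w}) ∪ {(w.1, v.2), (v.1, w.2)}
      = insert (w.1, v.2) (insert (v.1, w.2) (S \ {v, w})) := by
  constructor
  · ext x
    by_cases hxv : x = v <;> by_cases hxw : x = w <;>
      simp [Finset.mem_sdiff, Finset.mem_insert, hxv, hxw, hv, hw]
  · ext x
    simp [Finset.mem_sdiff, Finset.mem_insert, Finset.mem_union]

lemma step_coords {S : Finset (ℝ × ℝ)} (hS : (coords S).Nodup) {v w : ℝ × ℝ}
    (hv : v ∈ S) (hw : w ∈ S) (hvw : v ≠ w) :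
    coords ((S \ {v, w}) ∪ {(w.1, v.2), (v.1, w.2)}) = coords S := by
  obtain ⟨h1, h2, ha, hb⟩ := step_facts hS hv hw hvw
  obtain ⟨hSd, hTd⟩ := step_decomp hS hv hw hvw
  set R := S \ {v, w} with hR
  have hvR : v ∉ insert w R := by
    simp [hR, Finset.mem_insert, Finset.mem_sdiff, hvw]
  have hwR : w ∉ R := by simp [hR, Finset.mem_sdiff]
  have haR : (w.1, v.2) ∉ insert (v.1, w.2) R := by
    simp only [Finset.mem_insert, hR, Finset.mem_sdiff]
    push_neg
    constructor
    · intro h; exact absurd (congrArg Prod.fst h) (by simpa using h1.symm)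
    · intro h; exact absurd h ha
  have hbR : (v.1, w.2) ∉ R := by
    simp only [hR, Finset.mem_sdiff]
    push_neg
    intro h; exact absurd h hb
  have hSval : S.val = v ::ₘ w ::ₘ R.val := by
    rw [hSd, Finset.insert_val_of_notMem hvR, Finset.insert_val_of_notMem hwR]
  have hTval : ((S \ {v, w}) ∪ {(w.1, v.2), (v.1, w.2)}).val
      = (w.1, v.2) ::ₘ (v.1, w.2) ::ₘ R.val := by
    rw [hTd, Finset.insert_val_of_notMem haR, Finset.insert_val_of_notMem hbR]
  unfold coords
  rw [hSval, hTval]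
  simp only [Multiset.map_cons]
  congr 1
  · exact Multiset.cons_swap _ _ _

lemma chain_coords {k : ℕ} {V : Fin (k + 1) → Finset (ℝ × ℝ)} {vv ww : Fin k → ℝ × ℝ}
    (hstep : ∀ j : Fin k, vv j ∈ V j.castSucc ∧ ww j ∈ V j.castSucc ∧ vv j ≠ ww j ∧
      V j.succ = (V j.castSucc \ {vv j, ww j}) ∪
        {((ww j).1, (vv j).2), ((vv j).1, (ww j).2)})
    (hnodup : (coords (V 0)).Nodup) :
    ∀ j : Fin (k + 1), coords (V j) = coords (V 0) := by
  have key : ∀ n : ℕ, ∀ hn : n < k + 1, coords (V ⟨n, hn⟩) = coords (V 0) := by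
    intro n
    induction n with
    | zero =>
      intro hn
      have : (⟨0, hn⟩ : Fin (k + 1)) = 0 := Fin.ext (by simp)
      rw [this]
    | succ m ih =>
      intro hn
      have hm : m < k := by omega
      have hmk : m < k + 1 := by omega
      obtain ⟨hv, hw, hvw, hV⟩ := hstep ⟨m, hm⟩
      have hcast : (⟨m, hm⟩ : Fin k).castSucc = ⟨m, hmk⟩ := Fin.ext (by simp)
      have hsucc : (⟨m, hm⟩ : Fin k).succ = ⟨m + 1, hn⟩ := Fin.ext (by simp)
      rw [hsucc, hcast] at hV
      rw [hcast] at hv hw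
      have hnd : (coords (V ⟨m, hmk⟩)).Nodup := by rw [ih hmk]; exact hnodup
      rw [hV, step_coords hnd hv hw hvw, ih hmk]
  intro j
  have := key j.1 j.2
  rwa [Fin.eta] at this

lemma wind_measurable (S : Finset (ℝ × ℝ)) (g : ℝ × ℝ → ℝ × ℝ) :
    Measurable fun p : ℝ × ℝ => ((wind S g p : ℤ) : ℝ) := by
  have heq : (fun p : ℝ × ℝ => ((wind S g p : ℤ) : ℝ))
      = fun p => ∑ q ∈ S, if p.2 < q.2 ∧ min q.1 (g q).1 < p.1 ∧ p.1 < max q.1 (g q).1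
          then (if (g q).1 < q.1 then (1:ℝ) else -1) else 0 := by
    funext p
    unfold wind
    push_cast [apply_ite (fun z : ℤ => (z : ℝ))]
    rfl
  rw [heq]
  apply Finset.measurable_sum
  intro q _
  apply Measurable.ite ?_ measurable_const measurable_const
  rw [Set.setOf_and, Set.setOf_and]
  exact (measurableSet_lt measurable_snd measurable_const).inter
    ((measurableSet_lt measurable_const measurable_fst).inter
      (measurableSet_lt measurable_fst measurable_const))

lemma rect_meas (v w : ℝ × ℝ) : MeasurableSet (Set.uIcc v.1 w.1 ×ˢ Set.uIcc v.2 w.2) :=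
  measurableSet_uIcc.prod measurableSet_uIcc

lemma rect_volume (v w : ℝ × ℝ) :
    volume (Set.uIcc v.1 w.1 ×ˢ Set.uIcc v.2 w.2)
      = ENNReal.ofReal |w.1 - v.1| * ENNReal.ofReal |w.2 - v.2| := by
  rw [Measure.volume_eq_prod, Measure.prod_prod, Real.volume_interval, Real.volume_interval]

lemma ind_integrable (v w : ℝ × ℝ) :
    Integrable ((Set.uIcc v.1 w.1 ×ˢ Set.uIcc v.2 w.2).indicator fun _ => (1:ℝ)) := by
  rw [integrable_indicator_iff (rect_meas v w)]
  refine integrableOn_const ?_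
  rw [rect_volume]
  exact (ENNReal.mul_lt_top ENNReal.ofReal_lt_top ENNReal.ofReal_lt_top).ne

lemma ind_integral (v w : ℝ × ℝ) :
    ∫ p : ℝ × ℝ, (Set.uIcc v.1 w.1 ×ˢ Set.uIcc v.2 w.2).indicator (fun _ => (1:ℝ)) p
      = |w.1 - v.1| * |w.2 - v.2| := by
  rw [integral_indicator_const (1:ℝ) (rect_meas v w), measureReal_def, rect_volume, ENNReal.toReal_mul,
    ENNReal.toReal_ofReal (abs_nonneg _), ENNReal.toReal_ofReal (abs_nonneg _),
    smul_eq_mul, mul_one]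

lemma term_self (q p : ℝ × ℝ) : term q q p = 0 := by
  unfold term
  rw [min_self, max_self]
  have hc : ¬(p.2 < q.2 ∧ q.1 < p.1 ∧ p.1 < q.1) := by rintro ⟨-, h1, h2⟩; linarith
  rw [if_neg hc]

lemma null_fst (X : Finset ℝ) : volume {p : ℝ × ℝ | p.1 ∈ (X : Set ℝ)} = 0 := by
  have h : {p : ℝ × ℝ | p.1 ∈ (X : Set ℝ)} = (X : Set ℝ) ×ˢ (Set.univ : Set ℝ) := by
    ext p; simp [Set.mem_prod]
  rw [h, Measure.volume_eq_prod, Measure.prod_prod, X.finite_toSet.measure_zero, zero_mul]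

lemma main_ind (k : ℕ) : ∀ (V : Fin (k + 1) → Finset (ℝ × ℝ)) (vv ww : Fin k → ℝ × ℝ)
    (_ : ∀ j : Fin k, vv j ∈ V j.castSucc ∧ ww j ∈ V j.castSucc ∧ vv j ≠ ww j ∧
      V j.succ = (V j.castSucc \ {vv j, ww j}) ∪
        {((ww j).1, (vv j).2), ((vv j).1, (ww j).2)})
    (_ : (coords (V 0)).Nodup)
    (h : ℝ × ℝ → ℝ × ℝ)
    (_ : ∀ q ∈ V 0, h q ∈ V (Fin.last k) ∧ (h q).2 = q.2),
    Integrable (fun p : ℝ × ℝ => |((wind (V 0) h p : ℤ) : ℝ)|) ∧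
    ∫ p : ℝ × ℝ, |((wind (V 0) h p : ℤ) : ℝ)|
      ≤ ∑ j : Fin k, |(ww j).1 - (vv j).1| * |(ww j).2 - (vv j).2| := by
  induction k with
  | zero =>
    intro V vv ww hstep hnodup h hh
    have h0 : ∀ p : ℝ × ℝ, wind (V 0) h p = 0 := by
      intro p
      rw [wind_eq]
      apply Finset.sum_eq_zero
      intro q hq
      obtain ⟨hq1, hq2⟩ := hh q hq
      have hlast : (Fin.last 0) = (0 : Fin 1) := rfl
      rw [hlast] at hq1
      have : h q = q := snd_injOn hnodup _ hq1 _ hq hq2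
      rw [this, term_self]
    simp only [h0]
    constructor
    · simpa using (integrable_zero (ℝ × ℝ) ℝ volume)
    · simp
  | succ k ih =>
    intro V vv ww hstep hnodup h hh
    obtain ⟨hv, hw, hvw, hV1⟩ := hstep 0
    rw [Fin.castSucc_zero] at hv hw
    rw [Fin.castSucc_zero, Fin.succ_zero_eq_one] at hV1
    obtain ⟨hne1, hne2, haS, hbS⟩ := step_facts hnodup hv hw hvw
    obtain ⟨hSd, hTd⟩ := step_decomp hnodup hv hw hvw
    rw [← hV1] at hTd
    set R : Finset (ℝ × ℝ) := V 0 \ {vv 0, ww 0} with hR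
    set a : ℝ × ℝ := ((ww 0).1, (vv 0).2) with ha_def
    set b : ℝ × ℝ := ((vv 0).1, (ww 0).2) with hb_def
    classical
    set h' : ℝ × ℝ → ℝ × ℝ :=
      fun q => if q = a then h (vv 0) else if q = b then h (ww 0) else h q with hh'_def
    set V' : Fin (k + 1) → Finset (ℝ × ℝ) := fun i => V i.succ with hV'_def
    have hba : b ≠ a := by
      rw [ha_def, hb_def]; intro hE; rw [Prod.mk.injEq] at hE; exact hne1 hE.1
    have hab : a ≠ b := hba.symm
    have h'a : h' a = h (vv 0) := by rw [hh'_def]; simp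
    have h'b : h' b = h (ww 0) := by rw [hh'_def]; simp [hba]
    have h'R : ∀ q : ℝ × ℝ, q ≠ a → q ≠ b → h' q = h q := by
      intro q h1 h2; rw [hh'_def]; simp [h1, h2]
    have hstep' : ∀ j : Fin k, vv j.succ ∈ V' j.castSucc ∧ ww j.succ ∈ V' j.castSucc ∧
        vv j.succ ≠ ww j.succ ∧
        V' j.succ = (V' j.castSucc \ {vv j.succ, ww j.succ}) ∪
          {((ww j.succ).1, (vv j.succ).2), ((vv j.succ).1, (ww j.succ).2)} := by
      intro j
      have hj := hstep j.succ
      rw [← Fin.succ_castSucc] at hj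
      exact hj
    have hcV1 : coords (V 1) = coords (V 0) := by
      rw [hV1]; exact step_coords hnodup hv hw hvw
    have hV'0 : V' 0 = insert a (insert b R) := by
      show V ((0 : Fin (k + 1)).succ) = _
      rw [Fin.succ_zero_eq_one]; exact hTd
    have hnodup' : (coords (V' 0)).Nodup := by
      show (coords (V ((0 : Fin (k + 1)).succ))).Nodup
      rw [Fin.succ_zero_eq_one, hcV1]; exact hnodup
    have hlast' : V' (Fin.last k) = V (Fin.last (k + 1)) := by
      show V ((Fin.last k).succ) = _
      rw [Fin.succ_last]
    have hh' : ∀ q ∈ V' 0, h' q ∈ V' (Fin.last k) ∧ (h' q).2 = q.2 := by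
      intro q hq
      rw [hlast']
      rw [hV'0] at hq
      rcases Finset.mem_insert.1 hq with rfl | hq2
      · rw [h'a]
        exact ⟨(hh _ hv).1, by rw [(hh _ hv).2, ha_def]⟩
      · rcases Finset.mem_insert.1 hq2 with rfl | hq3
        · rw [h'b]
          exact ⟨(hh _ hw).1, by rw [(hh _ hw).2, hb_def]⟩
        · have hqS : q ∈ V 0 := (Finset.mem_sdiff.1 hq3).1
          have hqa : q ≠ a := fun hE => haS (hE ▸ hqS)
          have hqb : q ≠ b := fun hE => hbS (hE ▸ hqS)
          rw [h'R q hqa hqb]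
          exact hh q hqS
    obtain ⟨ihInt, ihLe⟩ := ih V' (fun j => vv j.succ) (fun j => ww j.succ) hstep' hnodup' h' hh'
    have hchain := chain_coords hstep hnodup
    -- pointwise identity away from vertical lines through coordinates
    have hkey : ∀ p : ℝ × ℝ, p.1 ∉ (coords (V 0)).toFinset →
        wind (V 0) h p = (term (vv 0) a p + term (ww 0) b p) + wind (V' 0) h' p := by
      intro p hp
      have hpX : ∀ x : ℝ, x ∈ coords (V 0) → p.1 ≠ x := by
        intro x hx hE; exact hp (by rw [hE]; exact Multiset.mem_toFinset.2 hx)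
      have hpv : p.1 ≠ (vv 0).1 := hpX _ (mem_coords_fst hv)
      have hpw : p.1 ≠ (ww 0).1 := hpX _ (mem_coords_fst hw)
      have hphv : p.1 ≠ (h (vv 0)).1 := by
        apply hpX
        rw [← hchain (Fin.last (k + 1))]
        exact mem_coords_fst (hh _ hv).1
      have hphw : p.1 ≠ (h (ww 0)).1 := by
        apply hpX
        rw [← hchain (Fin.last (k + 1))]
        exact mem_coords_fst (hh _ hw).1
      have hvnotin : vv 0 ∉ insert (ww 0) R := by
        simp [hR, Finset.mem_insert, Finset.mem_sdiff, hvw]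
      have hwnotin : ww 0 ∉ R := by simp [hR, Finset.mem_sdiff]
      have haR : a ∉ R := fun hE => haS (Finset.mem_sdiff.1 hE).1
      have hbR : b ∉ R := fun hE => hbS (Finset.mem_sdiff.1 hE).1
      have hanotin : a ∉ insert b R := by
        simp only [Finset.mem_insert]
        push_neg
        exact ⟨hab, haR⟩
      rw [wind_eq, wind_eq, hV'0, hSd, Finset.sum_insert hvnotin, Finset.sum_insert hwnotin,
        Finset.sum_insert hanotin, Finset.sum_insert hbR]
      have hterm_a : term a (h' a) p = term a (h (vv 0)) p := by rw [h'a]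
      have hterm_b : term b (h' b) p = term b (h (ww 0)) p := by rw [h'b]
      have hterm_R : ∀ q ∈ R, term q (h' q) p = term q (h q) p := by
        intro q hqR
        have hqS : q ∈ V 0 := (Finset.mem_sdiff.1 hqR).1
        have hqa : q ≠ a := fun hE => haS (hE ▸ hqS)
        have hqb : q ≠ b := fun hE => hbS (hE ▸ hqS)
        rw [h'R q hqa hqb]
      rw [hterm_a, hterm_b, Finset.sum_congr rfl hterm_R]
      have hsplit_v : term (vv 0) (h (vv 0)) p = term (vv 0) a p + term a (h (vv 0)) p :=
        term_add _ _ _ _ (by rw [ha_def]) hpv (by rw [ha_def]; exact hpw) hphv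
      have hsplit_w : term (ww 0) (h (ww 0)) p = term (ww 0) b p + term b (h (ww 0)) p :=
        term_add _ _ _ _ (by rw [hb_def]) hpw (by rw [hb_def]; exact hpv) hphw
      rw [hsplit_v, hsplit_w]
      ring
    -- a.e. bound
    have hae : ∀ᵐ p : ℝ × ℝ, p.1 ∉ (coords (V 0)).toFinset := by
      have h0 := measure_eq_zero_iff_ae_notMem.1 (null_fst (coords (V 0)).toFinset)
      filter_upwards [h0] with p hp
      exact fun hmem => hp (by simpa using hmem)
    have haebound : ∀ᵐ p : ℝ × ℝ, |((wind (V 0) h p : ℤ) : ℝ)| ≤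
        (Set.uIcc (vv 0).1 (ww 0).1 ×ˢ Set.uIcc (vv 0).2 (ww 0).2).indicator
          (fun _ => (1 : ℝ)) p + |((wind (V' 0) h' p : ℤ) : ℝ)| := by
      filter_upwards [hae] with p hp
      have hpX : ∀ x : ℝ, x ∈ coords (V 0) → p.1 ≠ x := by
        intro x hx hE; exact hp (by rw [hE]; exact Multiset.mem_toFinset.2 hx)
      have hpv : p.1 ≠ (vv 0).1 := hpX _ (mem_coords_fst hv)
      have hpw : p.1 ≠ (ww 0).1 := hpX _ (mem_coords_fst hw)
      rw [hkey p hp]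
      push_cast
      refine le_trans (abs_add_le _ _) ?_
      apply add_le_add_left
      have hD := D_bound (vv 0) (ww 0) p hpv hpw
      rw [← ha_def, ← hb_def] at hD
      exact_mod_cast hD
    have hInt0 : Integrable (fun p : ℝ × ℝ => |((wind (V 0) h p : ℤ) : ℝ)|) := by
      apply Integrable.mono' ((ind_integrable (vv 0) (ww 0)).add ihInt)
        (wind_measurable (V 0) h).abs.aestronglyMeasurable
      filter_upwards [haebound] with p hp
      rw [Real.norm_eq_abs, abs_abs]
      exact hp
    refine ⟨hInt0, ?_⟩
    calc ∫ p : ℝ × ℝ, |((wind (V 0) h p : ℤ) : ℝ)|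
        ≤ ∫ p : ℝ × ℝ, ((Set.uIcc (vv 0).1 (ww 0).1 ×ˢ Set.uIcc (vv 0).2 (ww 0).2).indicator
            (fun _ => (1 : ℝ)) p + |((wind (V' 0) h' p : ℤ) : ℝ)|) :=
          integral_mono_ae hInt0 ((ind_integrable _ _).add ihInt) haebound
      _ = (∫ p : ℝ × ℝ, (Set.uIcc (vv 0).1 (ww 0).1 ×ˢ Set.uIcc (vv 0).2 (ww 0).2).indicator
            (fun _ => (1 : ℝ)) p) + ∫ p : ℝ × ℝ, |((wind (V' 0) h' p : ℤ) : ℝ)| :=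
          integral_add (ind_integrable _ _) ihInt
      _ ≤ |(ww 0).1 - (vv 0).1| * |(ww 0).2 - (vv 0).2|
            + ∑ j : Fin k, |(ww j.succ).1 - (vv j.succ).1| * |(ww j.succ).2 - (vv j.succ).2| := by
          rw [ind_integral]
          exact add_le_add_right ihLe _
      _ = ∑ j : Fin (k + 1), |(ww j).1 - (vv j).1| * |(ww j).2 - (vv j).2| := by
          rw [Fin.sum_univ_succ]

theorem stmt16 (k : ℕ) (V : Fin (k + 1) → Finset (ℝ × ℝ)) (vv ww : Fin k → ℝ × ℝ)
    (hstep : ∀ j : Fin k, vv j ∈ V j.castSucc ∧ ww j ∈ V j.castSucc ∧ vv j ≠ ww j ∧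
      V j.succ = (V j.castSucc \ {vv j, ww j}) ∪
        {((ww j).1, (vv j).2), ((vv j).1, (ww j).2)})
    (hnodup : (coords (V 0)).Nodup)
    (h : ℝ × ℝ → ℝ × ℝ)
    (hh : ∀ q ∈ V 0, h q ∈ V (Fin.last k) ∧ (h q).2 = q.2) :
    -- the total (unsigned) area of the rectangles is at least the absolute area
    -- `|Area|(P) = ∑ |ω(Aᵢ)|·Area(Aᵢ) = ∫ |ω|` of the lattice polytope `P` with
    -- `Ver₀(P) = V 0` and `Ver₁(P) = V (Fin.last k)`.
    ∑ j : Fin k, |(ww j).1 - (vv j).1| * |(ww j).2 - (vv j).2|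
      ≥ ∫ p : ℝ × ℝ, |((wind (V 0) h p : ℤ) : ℝ)| := by
  exact (main_ind k V vv ww hstep hnodup h hh).2
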